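/- Let {Λ_i}_{i∈I} be a g-frame for H with g-frame operator S, and let {Γ_i}_{i∈I} be an alternate dual g-frame of {Λ_i}. Then for every x ∈ H, ∑_i ‖Λ_i x − Γ_i x‖² = ∑_i ‖Λ_i x − Λ_i S^{-1} x‖² + ∑_i ‖Λ_i S^{-1} x − Γ_i x‖². -/

import Mathlib

/-- Summability of `‖f i - g i‖²` from summability of the squared norms. -/
lemma summable_norm_sub_sq_aux {K : Type*} [NormedAddCommGroup K] {I : Type*}
    (f g : I → K) (hf : Summable fun i => ‖f i‖ ^ 2) (hg : Summable fun i => ‖g i‖ ^ 2) :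
    Summable (fun i => ‖f i - g i‖ ^ 2) := by
  refine Summable.of_nonneg_of_le (fun i => by positivity) (fun i => ?_)
    ((hf.add hg).mul_left 2)
  have h1 : ‖f i - g i‖ ≤ ‖f i‖ + ‖g i‖ := norm_sub_le _ _
  nlinarith [sq_nonneg (‖f i‖ - ‖g i‖), norm_nonneg (f i - g i), norm_nonneg (f i),
    norm_nonneg (g i)]

/-- For a g-frame `{Λ i}` with frame operator `S` and an alternate dual g-frame
`{Γ i}`, for every `x`:
`∑ i ‖Λ i x − Γ i x‖² = ∑ i ‖Λ i x − Λ i S⁻¹ x‖² + ∑ i ‖Λ i S⁻¹ x − Γ i x‖²`. -/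
theorem gframe_alternate_dual_pointwise_identity
    {H K : Type*} [NormedAddCommGroup H] [InnerProductSpace ℂ H] [CompleteSpace H]
    [NormedAddCommGroup K] [InnerProductSpace ℂ K] [CompleteSpace K]
    {I : Type*} (Λ Γ : I → (H →L[ℂ] K)) (S Sinv : H →L[ℂ] H)
    (A B C D : ℝ) (hA : 0 < A) (hB : 0 < B) (hC : 0 < C) (hD : 0 < D)
    (hΛsum : ∀ x : H, Summable fun i => ‖Λ i x‖ ^ 2)
    (hΛlow : ∀ x : H, A * ‖x‖ ^ 2 ≤ ∑' i, ‖Λ i x‖ ^ 2)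
    (hΛup : ∀ x : H, ∑' i, ‖Λ i x‖ ^ 2 ≤ B * ‖x‖ ^ 2)
    (hΓsum : ∀ x : H, Summable fun i => ‖Γ i x‖ ^ 2)
    (hΓlow : ∀ x : H, C * ‖x‖ ^ 2 ≤ ∑' i, ‖Γ i x‖ ^ 2)
    (hΓup : ∀ x : H, ∑' i, ‖Γ i x‖ ^ 2 ≤ D * ‖x‖ ^ 2)
    (hS : ∀ x : H, HasSum (fun i => (Λ i).adjoint (Λ i x)) (S x))
    (hSinv₁ : ∀ x : H, S (Sinv x) = x) (hSinv₂ : ∀ x : H, Sinv (S x) = x)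
    (hdual : ∀ x : H, HasSum (fun i => (Λ i).adjoint (Γ i x)) x) :
    ∀ x : H, ∑' i, ‖Λ i x - Γ i x‖ ^ 2
      = (∑' i, ‖Λ i x - Λ i (Sinv x)‖ ^ 2) + ∑' i, ‖Λ i (Sinv x) - Γ i x‖ ^ 2 := by
  intro x
  set v := Sinv x with hv
  -- cross term sums to zero
  have h1 : HasSum (fun i => (inner ℂ x ((Λ i).adjoint (Λ i v)) : ℂ)) (inner ℂ x (S v)) :=
    (hS v).mapL (innerSL ℂ x)
  have h2 : HasSum (fun i => (inner ℂ x ((Λ i).adjoint (Γ i x)) : ℂ)) (inner ℂ x x) :=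
    (hdual x).mapL (innerSL ℂ x)
  have h3 : HasSum (fun i => (inner ℂ v ((Λ i).adjoint (Λ i v)) : ℂ)) (inner ℂ v (S v)) :=
    (hS v).mapL (innerSL ℂ v)
  have h4 : HasSum (fun i => (inner ℂ v ((Λ i).adjoint (Γ i x)) : ℂ)) (inner ℂ v x) :=
    (hdual x).mapL (innerSL ℂ v)
  have hcross : HasSum (fun i => (inner ℂ (Λ i x - Λ i v) (Λ i v - Γ i x) : ℂ)) 0 := by
    have h := (h1.sub h2).sub (h3.sub h4)
    rw [hSinv₁ x] at h
    convert h using 1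
    · rfl
    · funext i
      simp only [inner_sub_left, inner_sub_right, ContinuousLinearMap.adjoint_inner_right]
      ring
    · ring
  have hre : HasSum (fun i => RCLike.re (inner ℂ (Λ i x - Λ i v) (Λ i v - Γ i x) : ℂ)) 0 := by
    have := hcross.map (RCLike.re : ℂ →+ ℝ) RCLike.continuous_re
    simpa [Function.comp_def] using this
  have key : ∀ i, ‖Λ i x - Γ i x‖ ^ 2 = ‖Λ i x - Λ i v‖ ^ 2 + ‖Λ i v - Γ i x‖ ^ 2
      + 2 * RCLike.re (inner ℂ (Λ i x - Λ i v) (Λ i v - Γ i x) : ℂ) := by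
    intro i
    have hd : Λ i x - Γ i x = (Λ i x - Λ i v) + (Λ i v - Γ i x) := by abel
    rw [hd, @norm_add_sq ℂ]
    ring
  have s2 : Summable (fun i => ‖Λ i x - Λ i v‖ ^ 2) :=
    summable_norm_sub_sq_aux _ _ (hΛsum x) (hΛsum v)
  have s3 : Summable (fun i => ‖Λ i v - Γ i x‖ ^ 2) :=
    summable_norm_sub_sq_aux _ _ (hΛsum v) (hΓsum x)
  have hre2 : HasSum (fun i => 2 * RCLike.re (inner ℂ (Λ i x - Λ i v) (Λ i v - Γ i x) : ℂ)) 0 := by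
    simpa using hre.mul_left 2
  calc ∑' i, ‖Λ i x - Γ i x‖ ^ 2
      = ∑' i, (‖Λ i x - Λ i v‖ ^ 2 + ‖Λ i v - Γ i x‖ ^ 2
          + 2 * RCLike.re (inner ℂ (Λ i x - Λ i v) (Λ i v - Γ i x) : ℂ)) := tsum_congr key
    _ = (∑' i, (‖Λ i x - Λ i v‖ ^ 2 + ‖Λ i v - Γ i x‖ ^ 2))
          + ∑' i, 2 * RCLike.re (inner ℂ (Λ i x - Λ i v) (Λ i v - Γ i x) : ℂ) :=
        Summable.tsum_add (s2.add s3) hre2.summable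
    _ = (∑' i, ‖Λ i x - Λ i v‖ ^ 2) + ∑' i, ‖Λ i v - Γ i x‖ ^ 2 := by
        rw [Summable.tsum_add s2 s3, hre2.tsum_eq, add_zero]
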